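/- Let A_0, A_1, …, A_d be real symmetric n×n matrices, write A(x) = A_0 + x_1 A_1 + ⋯ + x_d A_d, and suppose A(x⁰) is positive definite for some x⁰ ∈ ℝ^d. Then the spectrahedron {x ∈ ℝ^d : A(x) ⪰ 0} equals the closure in ℝ^d of the connected component of x⁰ in the set {x ∈ ℝ^d : det A(x) > 0}. -/

import Mathlib

open Matrix Set Filter Topology

private lemma myPosSemidef_smul {n : ℕ} {B : Matrix (Fin n) (Fin n) ℝ} {t : ℝ}
    (ht : 0 ≤ t) (hB : B.PosSemidef) : (t • B).PosSemidef := by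
  refine .of_dotProduct_mulVec_nonneg ?_ fun y => ?_
  · have h := hB.1
    unfold Matrix.IsHermitian at h ⊢
    rw [conjTranspose_smul, h, star_trivial]
  · rw [smul_mulVec, dotProduct_smul, smul_eq_mul]
    exact mul_nonneg ht (hB.dotProduct_mulVec_nonneg y)

private lemma myPosDef_smul {n : ℕ} {B : Matrix (Fin n) (Fin n) ℝ} {t : ℝ}
    (ht : 0 < t) (hB : B.PosDef) : (t • B).PosDef := by
  refine .of_dotProduct_mulVec_pos ?_ fun y hy => ?_
  · have h := hB.1
    unfold Matrix.IsHermitian at h ⊢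
    rw [conjTranspose_smul, h, star_trivial]
  · rw [smul_mulVec, dotProduct_smul, smul_eq_mul]
    exact mul_pos ht (hB.dotProduct_mulVec_pos hy)

private lemma myPosDef_of_det {n : ℕ} {B : Matrix (Fin n) (Fin n) ℝ}
    (hB : B.PosSemidef) (hdet : 0 < B.det) : B.PosDef := by
  refine .of_dotProduct_mulVec_pos hB.1 fun y hy => ?_
  rcases (hB.dotProduct_mulVec_nonneg y).lt_or_eq with h | h
  · exact h
  · exfalso
    have h0 : B *ᵥ y = 0 := (hB.dotProduct_mulVec_zero_iff y).mp h.symm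
    exact hdet.ne' (Matrix.exists_mulVec_eq_zero_iff.mp ⟨y, hy, h0⟩)

theorem stmt1 {d n : ℕ} (A0 : Matrix (Fin n) (Fin n) ℝ)
    (A : Fin d → Matrix (Fin n) (Fin n) ℝ)
    (hA0 : A0.IsSymm) (hA : ∀ i, (A i).IsSymm)
    (x0 : Fin d → ℝ) (hpd : (A0 + ∑ i, x0 i • A i).PosDef) :
    {x : Fin d → ℝ | (A0 + ∑ i, x i • A i).PosSemidef} =
      closure (connectedComponentIn
        {x : Fin d → ℝ | 0 < (A0 + ∑ i, x i • A i).det} x0) := by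
  classical
  set M : (Fin d → ℝ) → Matrix (Fin n) (Fin n) ℝ := fun x => A0 + ∑ i, x i • A i with hMdef
  show {x | (M x).PosSemidef} = closure (connectedComponentIn {x | 0 < (M x).det} x0)
  have hpd' : (M x0).PosDef := hpd
  -- symmetry
  have hherm : ∀ x, (M x).IsHermitian := by
    intro x
    show (M x)ᴴ = M x
    rw [conjTranspose_eq_transpose_of_trivial, hMdef]
    simp only [transpose_add, Matrix.transpose_sum, transpose_smul]
    rw [hA0.eq]
    congr 1
    exact Finset.sum_congr rfl fun i _ => by rw [(hA i).eq]
  -- continuity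
  have hcont : Continuous M := by
    rw [hMdef]
    exact continuous_const.add (continuous_finset_sum _ fun i _ =>
      (continuous_apply i).smul continuous_const)
  -- affine identity
  have haff : ∀ (t : ℝ) (x y : Fin d → ℝ),
      M (t • x + (1 - t) • y) = t • M x + (1 - t) • M y := by
    intro t x y
    rw [hMdef]
    simp only [Pi.add_apply, Pi.smul_apply, smul_eq_mul]
    have hsum : (∑ i, (t * x i + (1 - t) * y i) • A i)
        = t • (∑ i, x i • A i) + (1 - t) • (∑ i, y i • A i) := by
      rw [Finset.smul_sum, Finset.smul_sum, ← Finset.sum_add_distrib]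
      exact Finset.sum_congr rfl fun i _ => by rw [add_smul, smul_smul, smul_smul]
    rw [hsum]
    module
  set S := {x | (M x).PosSemidef} with hSdef
  set P := {x | (M x).PosDef} with hPdef
  set U := {x | 0 < (M x).det} with hUdef
  have hPS : P ⊆ S := fun x hx => hx.posSemidef
  have hPU : P ⊆ U := fun x hx => hx.det_pos
  have hSclosed : IsClosed S := by
    have : S = ⋂ y : Fin n → ℝ, {x | (0:ℝ) ≤ star y ⬝ᵥ (M x) *ᵥ y} := by
      ext x
      simp only [hSdef, mem_iInter, mem_setOf_eq]
      exact ⟨fun h y => h.dotProduct_mulVec_nonneg y, fun h => .of_dotProduct_mulVec_nonneg (hherm x) h⟩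
    rw [this]
    exact isClosed_iInter fun y => isClosed_le continuous_const
      (continuous_const.dotProduct (hcont.matrix_mulVec continuous_const))
  -- characterization of P via the unit sphere
  have hchar : P = {x | ∀ y ∈ Metric.sphere (0 : Fin n → ℝ) 1,
      (0:ℝ) < star y ⬝ᵥ (M x) *ᵥ y} := by
    ext x
    simp only [hPdef, mem_setOf_eq]
    constructor
    · intro h y hy
      refine h.dotProduct_mulVec_pos fun h0 => ?_
      rw [mem_sphere_zero_iff_norm, h0, norm_zero] at hy
      exact one_ne_zero hy.symm
    · intro h
      refine .of_dotProduct_mulVec_pos (hherm x) fun y hy0 => ?_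
      have hny : (0:ℝ) < ‖y‖ := norm_pos_iff.mpr hy0
      have hmem : ‖y‖⁻¹ • y ∈ Metric.sphere (0 : Fin n → ℝ) 1 := by
        rw [mem_sphere_zero_iff_norm, norm_smul, norm_inv, norm_norm,
          inv_mul_cancel₀ hny.ne']
      have hq := h _ hmem
      rw [star_smul, star_trivial, Matrix.mulVec_smul, dotProduct_smul,
        smul_dotProduct, smul_eq_mul, smul_eq_mul] at hq
      nlinarith [mul_nonneg (inv_pos.mpr hny).le (inv_pos.mpr hny).le]
  have hPopen : IsOpen P := by
    rw [hchar, isOpen_iff_forall_mem_open]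
    intro x hx
    have hK : IsCompact (Metric.sphere (0 : Fin n → ℝ) 1) := isCompact_sphere 0 1
    have hV : IsOpen {p : (Fin d → ℝ) × (Fin n → ℝ) |
        (0:ℝ) < star p.2 ⬝ᵥ (M p.1) *ᵥ p.2} :=
      isOpen_lt continuous_const
        ((continuous_star.comp continuous_snd).dotProduct
          ((hcont.comp continuous_fst).matrix_mulVec continuous_snd))
    have hsub : ({x} : Set (Fin d → ℝ)) ×ˢ Metric.sphere (0 : Fin n → ℝ) 1 ⊆
        {p : (Fin d → ℝ) × (Fin n → ℝ) | (0:ℝ) < star p.2 ⬝ᵥ (M p.1) *ᵥ p.2} := by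
      rintro ⟨a, y⟩ ⟨ha, hy⟩
      rw [mem_singleton_iff] at ha
      subst ha
      exact hx y hy
    obtain ⟨u, v, hu, hv, hxu, hKv, huv⟩ :=
      generalized_tube_lemma isCompact_singleton hK hV hsub
    exact ⟨u, fun z hz y hy => huv (mk_mem_prod hz (hKv hy)), hu,
      hxu (mem_singleton x)⟩
  -- segments from x0 stay in P
  have hsegP : ∀ x ∈ P, segment ℝ x0 x ⊆ P := by
    rintro x hx z ⟨a, b, ha, hb, hab, rfl⟩
    have hb' : b = 1 - a := by linarith
    subst hb'
    show (M (a • x0 + (1 - a) • x)).PosDef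
    rw [haff]
    rcases ha.lt_or_eq with h0 | h0
    · rcases hb.lt_or_eq with h1 | h1
      · exact (myPosDef_smul h0 hpd').add (myPosDef_smul h1 hx)
      · have : a = 1 := by linarith
        subst this
        simpa using hpd'
    · rw [← h0]
      rw [zero_smul, zero_add, sub_zero, one_smul]
      exact hx
  have hx0U : x0 ∈ U := hpd'.det_pos
  set C := connectedComponentIn U x0 with hCdef
  have hx0C : x0 ∈ C := mem_connectedComponentIn hx0U
  have hCU : C ⊆ U := connectedComponentIn_subset U x0
  have hPC : P ⊆ C := by
    intro x hx
    exact (convex_segment x0 x).isPreconnected.subset_connectedComponentIn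
      (left_mem_segment ℝ x0 x) ((hsegP x hx).trans hPU)
      (right_mem_segment ℝ x0 x)
  have hclPS : closure P ⊆ S := hSclosed.closure_subset_iff.mpr hPS
  have hCP : C ⊆ P := by
    refine IsPreconnected.subset_left_of_subset_union hPopen
      isClosed_closure.isOpen_compl
      (disjoint_compl_right.mono_left subset_closure) ?_
      ⟨x0, hx0C, hpd'⟩ isPreconnected_connectedComponentIn
    intro x hxC
    by_cases hxcl : x ∈ closure P
    · exact Or.inl (myPosDef_of_det (hclPS hxcl) (hCU hxC))
    · exact Or.inr hxcl
  have hSP : S ⊆ closure P := by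
    intro x hx
    have ht0 : Tendsto (fun k : ℕ => 1 / ((k : ℝ) + 1)) atTop (𝓝 0) :=
      tendsto_one_div_add_atTop_nhds_zero_nat
    have tend : Tendsto (fun k : ℕ => (1 / ((k : ℝ) + 1)) • x0
        + (1 - 1 / ((k : ℝ) + 1)) • x) atTop (𝓝 x) := by
      have := (ht0.smul_const x0).add (((tendsto_const_nhds (x := (1:ℝ))).sub ht0).smul_const x)
      simpa using this
    refine mem_closure_of_tendsto tend ?_
    filter_upwards with k
    have hk0 : (0:ℝ) < 1 / ((k : ℝ) + 1) := by positivity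
    have hk1 : 1 / ((k : ℝ) + 1) ≤ 1 := by
      rw [div_le_one (by positivity)]
      linarith [Nat.cast_nonneg (α := ℝ) k]
    show (M _).PosDef
    rw [haff]
    exact (myPosDef_smul hk0 hpd').add_posSemidef
      (myPosSemidef_smul (by linarith) hx)
  apply Subset.antisymm
  · exact hSP.trans (closure_mono hPC)
  · rw [hSclosed.closure_subset_iff]
    exact hCP.trans hPS
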